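/- Let n be a positive integer and let f : (ℝ_{>0})^n → (ℝ_{>0})^n be a homogeneous, monotone function. Then f has an eigenvector in (ℝ_{>0})^n if and only if some orbit {f^k(x) : k ∈ ℕ} of f is bounded in the Hilbert projective metric; moreover, in that case every orbit of f is bounded in the Hilbert projective metric. -/

import Mathlib

/-- Hilbert's projective metric on the positive cone:
`d_H(y,z) = max_i log(y_i/z_i) - min_i log(y_i/z_i)`. -/
noncomputable def dH {n : ℕ} (y z : Fin n → ℝ) : ℝ :=
  (⨆ i, Real.log (y i / z i)) - (⨅ i, Real.log (y i / z i))

set_option linter.unusedSectionVars false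
set_option linter.unusedVariables false

namespace EigAux

variable {n : ℕ}

/-- The variation seminorm `max w - min w`. -/
noncomputable def NV (w : Fin n → ℝ) : ℝ := (⨆ i, w i) - (⨅ i, w i)

lemma bddA (w : Fin n → ℝ) : BddAbove (Set.range w) :=
  Set.Finite.bddAbove (Set.finite_range w)

lemma bddB (w : Fin n → ℝ) : BddBelow (Set.range w) :=
  Set.Finite.bddBelow (Set.finite_range w)

lemma le_sup (w : Fin n → ℝ) (i : Fin n) : w i ≤ ⨆ j, w j := le_ciSup (bddA w) i

lemma inf_le' (w : Fin n → ℝ) (i : Fin n) : (⨅ j, w j) ≤ w i := ciInf_le (bddB w) i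

lemma sub_le_NV (w : Fin n → ℝ) (i j : Fin n) : w i - w j ≤ NV w := by
  have h1 := le_sup w i; have h2 := inf_le' w j; unfold NV; linarith

lemma NV_nonneg [Nonempty (Fin n)] (w : Fin n → ℝ) : 0 ≤ NV w := by
  obtain ⟨i⟩ := ‹Nonempty (Fin n)›
  have h := sub_le_NV w i i; simpa using h

lemma NV_le [Nonempty (Fin n)] {w : Fin n → ℝ} {a b : ℝ}
    (h1 : ∀ i, a ≤ w i) (h2 : ∀ i, w i ≤ b) : NV w ≤ b - a := by
  have hs : (⨆ i, w i) ≤ b := ciSup_le h2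
  have hi : a ≤ ⨅ i, w i := le_ciInf h1
  unfold NV; linarith

lemma NV_add_le [Nonempty (Fin n)] (u v : Fin n → ℝ) : NV (u + v) ≤ NV u + NV v := by
  have hs : (⨆ i, (u + v) i) ≤ (⨆ i, u i) + (⨆ i, v i) :=
    ciSup_le fun i => add_le_add (le_sup u i) (le_sup v i)
  have hi : (⨅ i, u i) + (⨅ i, v i) ≤ ⨅ i, (u + v) i :=
    le_ciInf fun i => add_le_add (inf_le' u i) (inf_le' v i)
  unfold NV; linarith

lemma NV_smul_le [Nonempty (Fin n)] {c : ℝ} (hc : 0 ≤ c) (u : Fin n → ℝ) :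
    NV (c • u) ≤ c * NV u := by
  have h := NV_le (w := c • u) (a := c * ⨅ i, u i) (b := c * ⨆ i, u i)
    (fun i => by simpa using mul_le_mul_of_nonneg_left (inf_le' u i) hc)
    (fun i => by simpa using mul_le_mul_of_nonneg_left (le_sup u i) hc)
  calc NV (c • u) ≤ c * (⨆ i, u i) - c * ⨅ i, u i := h
    _ = c * NV u := by unfold NV; ring

lemma NV_add_const [Nonempty (Fin n)] (u : Fin n → ℝ) (c : ℝ) :
    NV (fun i => u i + c) = NV u := by
  have hs : (⨆ i, u i + c) = (⨆ i, u i) + c := by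
    apply le_antisymm
    · exact ciSup_le fun i => add_le_add_left (le_sup u i) c
    · have : (⨆ i, u i) ≤ (⨆ i, u i + c) - c :=
        ciSup_le fun i => le_sub_iff_add_le.mpr (le_ciSup (bddA fun i => u i + c) i)
      linarith
  have hi : (⨅ i, u i + c) = (⨅ i, u i) + c := by
    apply le_antisymm
    · have : (⨅ i, u i + c) - c ≤ ⨅ i, u i :=
        le_ciInf fun i => sub_le_iff_le_add.mpr (ciInf_le (bddB fun i => u i + c) i)
      linarith
    · exact le_ciInf fun i => add_le_add_left (inf_le' u i) c
  unfold NV; rw [hs, hi]; ring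

lemma norm_le_NV {u : Fin n → ℝ} (i0 : Fin n) (hu : u i0 = 0) : ‖u‖ ≤ NV u := by
  haveI : Nonempty (Fin n) := ⟨i0⟩
  rw [pi_norm_le_iff_of_nonneg (NV_nonneg u)]
  intro i
  rw [Real.norm_eq_abs, abs_le]
  constructor
  · have := sub_le_NV u i0 i; rw [hu] at this; linarith
  · have := sub_le_NV u i i0; rw [hu] at this; linarith

lemma NV_le_two_norm [Nonempty (Fin n)] (u : Fin n → ℝ) : NV u ≤ 2 * ‖u‖ := by
  have h := NV_le (w := u) (a := -‖u‖) (b := ‖u‖)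
    (fun i => neg_le_of_abs_le ((Real.norm_eq_abs (u i)) ▸ norm_le_pi_norm u i))
    (fun i => le_of_abs_le ((Real.norm_eq_abs (u i)) ▸ norm_le_pi_norm u i))
  linarith

lemma dH_eq {y z : Fin n → ℝ} (hy : ∀ i, 0 < y i) (hz : ∀ i, 0 < z i) :
    dH y z = NV (fun i => Real.log (y i) - Real.log (z i)) := by
  unfold dH NV
  have h : ∀ i, Real.log (y i / z i) = Real.log (y i) - Real.log (z i) :=
    fun i => Real.log_div (hy i).ne' (hz i).ne'
  simp only [h]

lemma dH_triangle [Nonempty (Fin n)] {a b c : Fin n → ℝ}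
    (ha : ∀ i, 0 < a i) (hb : ∀ i, 0 < b i) (hc : ∀ i, 0 < c i) :
    dH a c ≤ dH a b + dH b c := by
  rw [dH_eq ha hc, dH_eq ha hb, dH_eq hb hc]
  have he : (fun i => Real.log (a i) - Real.log (c i)) =
      (fun i => Real.log (a i) - Real.log (b i)) + (fun i => Real.log (b i) - Real.log (c i)) := by
    funext i; simp only [Pi.add_apply]; ring
  rw [he]
  exact NV_add_le _ _

lemma dH_scaled [Nonempty (Fin n)] {v : Fin n → ℝ} (hv : ∀ i, 0 < v i) {a b : ℝ}
    (ha : 0 < a) (hb : 0 < b) : dH (a • v) (b • v) = 0 := by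
  unfold dH
  have h : ∀ i, Real.log ((a • v) i / (b • v) i) = Real.log (a / b) := by
    intro i; simp only [Pi.smul_apply, smul_eq_mul]
    rw [mul_div_mul_right _ _ (hv i).ne']
  simp only [h]
  rw [ciSup_const, ciInf_const]; ring

/-- The abstract fixed-point lemma: a map nonexpansive for the variation seminorm,
vanishing at coordinate `i0`, with a bounded orbit, has approximate fixed points
at a bounded distance. -/
lemma approx_fixed (i0 : Fin n)
    (G : (Fin n → ℝ) → (Fin n → ℝ)) (p0 : Fin n → ℝ) (M : ℝ)
    (hGzero : ∀ w, G w i0 = 0) (hp00 : p0 i0 = 0)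
    (hGnon : ∀ u v, NV (G u - G v) ≤ NV (u - v))
    (hGM : ∀ k l : ℕ, NV (G^[k] p0 - G^[l] p0) ≤ M)
    {ε : ℝ} (hε : 0 < ε) (hε1 : ε < 1) :
    ∃ w : Fin n → ℝ, w = (1 - ε) • G w + ε • p0 ∧ NV (w - p0) ≤ 4 * M := by
  haveI : Nonempty (Fin n) := ⟨i0⟩
  have hM0 : 0 ≤ M := le_trans (by simpa using NV_nonneg (G^[0] p0 - G^[0] p0)) (hGM 0 0)
  set T : (Fin n → ℝ) → (Fin n → ℝ) := fun w => (1 - ε) • G w + ε • p0 with hT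
  have hTzero : ∀ w, T w i0 = 0 := by
    intro w
    simp only [hT, Pi.add_apply, Pi.smul_apply, smul_eq_mul, hGzero, hp00]
    ring
  have hTcon : ∀ u v, NV (T u - T v) ≤ (1 - ε) * NV (u - v) := by
    intro u v
    have he : T u - T v = (1 - ε) • (G u - G v) := by
      funext i
      simp only [hT, Pi.add_apply, Pi.sub_apply, Pi.smul_apply, smul_eq_mul]
      ring
    rw [he]
    calc NV ((1 - ε) • (G u - G v)) ≤ (1 - ε) * NV (G u - G v) :=
          NV_smul_le (by linarith) _
      _ ≤ (1 - ε) * NV (u - v) := mul_le_mul_of_nonneg_left (hGnon u v) (by linarith)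
  set u : ℕ → (Fin n → ℝ) := fun k => T^[k] p0 with hu
  have huzero : ∀ k, u k i0 = 0 := by
    intro k
    cases k with
    | zero => exact hp00
    | succ k =>
      show T^[k+1] p0 i0 = 0
      rw [Function.iterate_succ_apply']; exact hTzero _
  have hd1 : ∀ k, NV (u (k + 1) - u k) ≤ (1 - ε) ^ k * NV (u 1 - u 0) := by
    intro k; induction k with
    | zero => simp
    | succ k ih =>
      have h1 : u (k + 2) = T (u (k + 1)) := Function.iterate_succ_apply' T (k+1) p0
      have h2 : u (k + 1) = T (u k) := Function.iterate_succ_apply' T k p0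
      calc NV (u (k + 2) - u (k + 1)) = NV (T (u (k+1)) - T (u k)) := by rw [h1, h2]
        _ ≤ (1 - ε) * NV (u (k + 1) - u k) := hTcon _ _
        _ ≤ (1 - ε) * ((1 - ε) ^ k * NV (u 1 - u 0)) :=
            mul_le_mul_of_nonneg_left ih (by linarith)
        _ = (1 - ε) ^ (k + 1) * NV (u 1 - u 0) := by ring
  have hcauchy : CauchySeq u := by
    apply cauchySeq_of_le_geometric (1 - ε) (NV (u 1 - u 0)) (by linarith)
    intro k
    rw [dist_eq_norm, norm_sub_rev]
    calc ‖u (k + 1) - u k‖ ≤ NV (u (k + 1) - u k) :=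
          norm_le_NV i0 (by simp [Pi.sub_apply, huzero])
      _ ≤ (1 - ε) ^ k * NV (u 1 - u 0) := hd1 k
      _ = NV (u 1 - u 0) * (1 - ε) ^ k := by ring
  obtain ⟨w, hw⟩ := cauchySeq_tendsto_of_complete hcauchy
  have hTlip : LipschitzWith 2 T := by
    apply LipschitzWith.of_dist_le_mul
    intro a b
    rw [dist_eq_norm, dist_eq_norm]
    have h1 : ‖T a - T b‖ ≤ NV (T a - T b) :=
      norm_le_NV i0 (by simp [Pi.sub_apply, hTzero])
    have h2 := hTcon a b
    have h3 : NV (a - b) ≤ 2 * ‖a - b‖ := NV_le_two_norm _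
    have h4 : (1 - ε) * NV (a - b) ≤ NV (a - b) := by
      nlinarith [NV_nonneg (a - b)]
    push_cast
    linarith
  have hfix : T w = w := by
    have h1 : Filter.Tendsto (fun k => u (k + 1)) Filter.atTop (nhds w) :=
      hw.comp (Filter.tendsto_add_atTop_nat 1)
    have h2 : Filter.Tendsto (fun k => T (u k)) Filter.atTop (nhds (T w)) :=
      (hTlip.continuous.tendsto w).comp hw
    have h3 : (fun k => u (k + 1)) = fun k => T (u k) :=
      funext fun k => Function.iterate_succ_apply' T k p0
    rw [h3] at h1
    exact (tendsto_nhds_unique h1 h2).symm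
  set q : ℕ → (Fin n → ℝ) := fun k => G^[k] p0 with hq
  have hstep : ∀ k, NV (w - q (k + 1)) ≤ (1 - ε) * NV (w - q k) + ε * M := by
    intro k
    have he : w - q (k + 1) = (1 - ε) • (G w - q (k + 1)) + ε • (p0 - q (k + 1)) := by
      funext i
      have hi : w i = (1 - ε) * G w i + ε * p0 i := by
        conv_lhs => rw [← hfix]
        simp [hT]
      simp only [Pi.add_apply, Pi.sub_apply, Pi.smul_apply, smul_eq_mul]
      rw [hi]; ring
    have h1 : NV (G w - q (k + 1)) ≤ NV (w - q k) := by
      have hqe : q (k + 1) = G (q k) := Function.iterate_succ_apply' G k p0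
      rw [hqe]; exact hGnon w (q k)
    have h2 : NV (p0 - q (k + 1)) ≤ M := by
      have := hGM 0 (k + 1)
      exact this
    calc NV (w - q (k + 1)) = NV ((1 - ε) • (G w - q (k + 1)) + ε • (p0 - q (k + 1))) := by
          rw [← he]
      _ ≤ NV ((1 - ε) • (G w - q (k + 1))) + NV (ε • (p0 - q (k + 1))) := NV_add_le _ _
      _ ≤ (1 - ε) * NV (G w - q (k + 1)) + ε * NV (p0 - q (k + 1)) :=
          add_le_add (NV_smul_le (by linarith) _) (NV_smul_le (by linarith) _)
      _ ≤ (1 - ε) * NV (w - q k) + ε * M := by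
          have := mul_le_mul_of_nonneg_left h1 (by linarith : (0:ℝ) ≤ 1 - ε)
          have := mul_le_mul_of_nonneg_left h2 (le_of_lt hε)
          linarith
  have hq0 : q 0 = p0 := rfl
  have hiter : ∀ k, NV (w - q k) ≤ (1 - ε) ^ k * NV (w - p0) + M := by
    intro k; induction k with
    | zero => rw [hq0]; simp; linarith [NV_nonneg (w - p0)]
    | succ k ih =>
      calc NV (w - q (k + 1)) ≤ (1 - ε) * NV (w - q k) + ε * M := hstep k
        _ ≤ (1 - ε) * ((1 - ε) ^ k * NV (w - p0) + M) + ε * M :=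
            add_le_add_left (mul_le_mul_of_nonneg_left ih (by linarith)) _
        _ = (1 - ε) ^ (k + 1) * NV (w - p0) + M := by ring
  obtain ⟨k, hk⟩ := exists_pow_lt_of_lt_one (by norm_num : (0:ℝ) < 1/2) (by linarith : 1 - ε < 1)
  have htr : NV (w - p0) ≤ NV (w - q k) + M := by
    have he : w - p0 = (w - q k) + (q k - p0) := by abel
    have h2 : NV (q k - p0) ≤ M := by
      have := hGM k 0
      simpa using this
    calc NV (w - p0) = NV ((w - q k) + (q k - p0)) := by rw [← he]
      _ ≤ NV (w - q k) + NV (q k - p0) := NV_add_le _ _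
      _ ≤ NV (w - q k) + M := by linarith
  have hA0 : 0 ≤ NV (w - p0) := NV_nonneg _
  have hfin : NV (w - p0) ≤ 4 * M := by
    have h1 := hiter k
    have h2 : (1 - ε) ^ k * NV (w - p0) ≤ (1/2) * NV (w - p0) :=
      mul_le_mul_of_nonneg_right hk.le hA0
    linarith
  exact ⟨w, hfix.symm, hfin⟩

/-- A variation-seminorm-nonexpansive, normalized map with bounded orbit has
a genuine fixed point. -/
lemma G_fixed (i0 : Fin n)
    (G : (Fin n → ℝ) → (Fin n → ℝ)) (p0 : Fin n → ℝ) (M : ℝ)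
    (hGzero : ∀ w, G w i0 = 0) (hp00 : p0 i0 = 0)
    (hGnon : ∀ u v, NV (G u - G v) ≤ NV (u - v))
    (hGM : ∀ k l : ℕ, NV (G^[k] p0 - G^[l] p0) ≤ M) :
    ∃ w : Fin n → ℝ, G w = w := by
  haveI : Nonempty (Fin n) := ⟨i0⟩
  have hM0 : 0 ≤ M := le_trans (by simpa using NV_nonneg (G^[0] p0 - G^[0] p0)) (hGM 0 0)
  have heps : ∀ m : ℕ, 0 < 1 / ((m:ℝ) + 2) ∧ 1 / ((m:ℝ) + 2) < 1 := by
    intro m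
    have h2 : (0:ℝ) < (m:ℝ) + 2 := by positivity
    constructor
    · positivity
    · rw [div_lt_one h2]
      have : (0:ℝ) ≤ (m:ℝ) := Nat.cast_nonneg m
      linarith
  have hseq : ∀ m : ℕ, ∃ w : Fin n → ℝ,
      w = (1 - 1 / ((m:ℝ) + 2)) • G w + (1 / ((m:ℝ) + 2)) • p0 ∧ NV (w - p0) ≤ 4 * M :=
    fun m => approx_fixed i0 G p0 M hGzero hp00 hGnon hGM (heps m).1 (heps m).2
  choose w hwfix hwbd using hseq
  have hwz : ∀ m, w m i0 = 0 := by
    intro m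
    have hi := congrFun (hwfix m) i0
    simp only [Pi.add_apply, Pi.smul_apply, smul_eq_mul, hGzero, hp00] at hi
    simpa using hi
  have hwsub : ∀ m, ‖w m - p0‖ ≤ 4 * M := by
    intro m
    refine le_trans (norm_le_NV i0 ?_) (hwbd m)
    simp [Pi.sub_apply, hwz m, hp00]
  have hwnorm : ∀ m, ‖w m‖ ≤ ‖p0‖ + 4 * M := by
    intro m
    calc ‖w m‖ = ‖(w m - p0) + p0‖ := by rw [sub_add_cancel]
      _ ≤ ‖w m - p0‖ + ‖p0‖ := norm_add_le _ _
      _ ≤ ‖p0‖ + 4 * M := by linarith [hwsub m]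
  set R : ℝ := ‖p0‖ + 4 * M with hR
  have hball : ∀ m, w m ∈ Metric.closedBall (0 : Fin n → ℝ) R := by
    intro m
    rw [Metric.mem_closedBall, dist_zero_right]
    exact hwnorm m
  obtain ⟨wst, -, φ, hφ, hconv⟩ :=
    (isCompact_closedBall (0 : Fin n → ℝ) R).tendsto_subseq hball
  have hGlip : LipschitzWith 2 G := by
    apply LipschitzWith.of_dist_le_mul
    intro a b
    rw [dist_eq_norm, dist_eq_norm]
    have h1 : ‖G a - G b‖ ≤ NV (G a - G b) :=
      norm_le_NV i0 (by simp [Pi.sub_apply, hGzero])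
    have h2 := hGnon a b
    have h3 : NV (a - b) ≤ 2 * ‖a - b‖ := NV_le_two_norm _
    push_cast
    linarith
  set C : ℝ := ‖p0‖ + (2 * (R + ‖p0‖) + ‖G p0‖) with hC
  have hC0 : 0 ≤ C := by
    have := norm_nonneg p0
    have := norm_nonneg (G p0)
    have hR0 : 0 ≤ R := by rw [hR]; positivity
    rw [hC]; positivity
  have hsmall : ∀ m, ‖w m - G (w m)‖ ≤ C * (1 / ((m:ℝ) + 2)) := by
    intro m
    have he : w m - G (w m) = (1 / ((m:ℝ) + 2)) • (p0 - G (w m)) := by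
      funext i
      have hi := congrFun (hwfix m) i
      simp only [Pi.add_apply, Pi.smul_apply, smul_eq_mul] at hi
      simp only [Pi.sub_apply, Pi.smul_apply, smul_eq_mul]
      rw [hi]; ring
    rw [he, norm_smul, Real.norm_eq_abs, abs_of_pos (heps m).1]
    rw [mul_comm]
    apply mul_le_mul_of_nonneg_right _ (le_of_lt (heps m).1)
    have hb1 : ‖G (w m) - G p0‖ ≤ 2 * ‖w m - p0‖ := by
      have := hGlip.dist_le_mul (w m) p0
      rw [dist_eq_norm, dist_eq_norm] at this
      push_cast at this
      linarith
    have hb2 : ‖w m - p0‖ ≤ R + ‖p0‖ := by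
      calc ‖w m - p0‖ ≤ ‖w m‖ + ‖p0‖ := norm_sub_le _ _
        _ ≤ R + ‖p0‖ := by linarith [hwnorm m]
    calc ‖p0 - G (w m)‖ ≤ ‖p0‖ + ‖G (w m)‖ := norm_sub_le _ _
      _ ≤ ‖p0‖ + (‖G (w m) - G p0‖ + ‖G p0‖) := by
          have hx : ‖G (w m)‖ = ‖(G (w m) - G p0) + G p0‖ := by rw [sub_add_cancel]
          have := norm_add_le (G (w m) - G p0) (G p0)
          linarith [hx ▸ this]
      _ ≤ C := by rw [hC]; linarith
  have t1 : Filter.Tendsto (fun m : ℕ => 1 / ((m:ℝ) + 2)) Filter.atTop (nhds 0) := by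
    have h := (tendsto_one_div_add_atTop_nhds_zero_nat (𝕜 := ℝ)).comp (Filter.tendsto_add_atTop_nat 1)
    apply h.congr
    intro m
    simp only [Function.comp_apply]
    push_cast
    ring_nf
  have t2 : Filter.Tendsto (fun m : ℕ => C * (1 / ((m:ℝ) + 2))) Filter.atTop (nhds 0) := by
    have := t1.const_mul C
    simpa using this
  have hlim0 : Filter.Tendsto (fun m => w (φ m) - G (w (φ m))) Filter.atTop (nhds 0) := by
    apply squeeze_zero_norm (a := fun m : ℕ => C * (1 / ((m:ℝ) + 2))) _ t2
    intro m
    refine le_trans (hsmall (φ m)) ?_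
    apply mul_le_mul_of_nonneg_left _ hC0
    have hφm : (m:ℝ) ≤ (φ m : ℝ) := by exact_mod_cast hφ.le_apply
    apply one_div_le_one_div_of_le (by positivity)
    linarith
  have h2 : Filter.Tendsto (fun m => G (w (φ m))) Filter.atTop (nhds (G wst)) :=
    (hGlip.continuous.tendsto wst).comp hconv
  have h3 : Filter.Tendsto (fun m => w (φ m) - G (w (φ m))) Filter.atTop (nhds (wst - G wst)) :=
    hconv.sub h2
  have h4 : wst - G wst = 0 := tendsto_nhds_unique h3 hlim0
  exact ⟨wst, (sub_eq_zero.mp h4).symm⟩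

section FF

variable (f : (Fin n → ℝ) → (Fin n → ℝ))

/-- `f` in log coordinates. -/
noncomputable def Fof (w : Fin n → ℝ) : Fin n → ℝ :=
  fun i => Real.log (f (fun j => Real.exp (w j)) i)

variable (hmaps : ∀ x : Fin n → ℝ, (∀ i, 0 < x i) → ∀ i, 0 < f x i)
variable (hhom : ∀ c : ℝ, 0 < c → ∀ x : Fin n → ℝ, (∀ i, 0 < x i) → f (c • x) = c • f x)
variable (hmono : ∀ x y : Fin n → ℝ, (∀ i, 0 < x i) → (∀ i, 0 < y i) → x ≤ y → f x ≤ f y)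

include hmaps hhom hmono in
lemma Fof_nonexpansive [Nonempty (Fin n)] (u v : Fin n → ℝ) :
    NV (Fof f u - Fof f v) ≤ NV (u - v) := by
  set x : Fin n → ℝ := fun j => Real.exp (u j) with hxdef
  set y : Fin n → ℝ := fun j => Real.exp (v j) with hydef
  have hx : ∀ i, 0 < x i := fun i => Real.exp_pos _
  have hy : ∀ i, 0 < y i := fun i => Real.exp_pos _
  set β := ⨆ i, (u - v) i with hβ
  set α := ⨅ i, (u - v) i with hα
  have hby : ∀ i, 0 < (Real.exp β • y) i := fun i => mul_pos (Real.exp_pos _) (hy i)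
  have hay : ∀ i, 0 < (Real.exp α • y) i := fun i => mul_pos (Real.exp_pos _) (hy i)
  have h1 : f x ≤ Real.exp β • f y := by
    have hxle : x ≤ Real.exp β • y := by
      intro i
      have hb : u i - v i ≤ β := le_sup (u - v) i
      simp only [Pi.smul_apply, smul_eq_mul, hxdef, hydef, ← Real.exp_add]
      exact Real.exp_le_exp.mpr (by linarith)
    calc f x ≤ f (Real.exp β • y) := hmono x _ hx hby hxle
      _ = Real.exp β • f y := hhom _ (Real.exp_pos β) y hy
  have h2 : Real.exp α • f y ≤ f x := by
    have hyle : Real.exp α • y ≤ x := by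
      intro i
      have hb : α ≤ u i - v i := inf_le' (u - v) i
      simp only [Pi.smul_apply, smul_eq_mul, hxdef, hydef, ← Real.exp_add]
      exact Real.exp_le_exp.mpr (by linarith)
    calc Real.exp α • f y = f (Real.exp α • y) := (hhom _ (Real.exp_pos α) y hy).symm
      _ ≤ f x := hmono _ x hay hx hyle
  have hfx : ∀ i, 0 < f x i := hmaps x hx
  have hfy : ∀ i, 0 < f y i := hmaps y hy
  have key : NV (Fof f u - Fof f v) ≤ β - α := by
    apply NV_le
    · intro i
      have := h2 i
      simp only [Pi.smul_apply, smul_eq_mul] at this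
      have hl : Real.log (Real.exp α * f y i) ≤ Real.log (f x i) :=
        Real.log_le_log (mul_pos (Real.exp_pos _) (hfy i)) this
      rw [Real.log_mul (Real.exp_ne_zero α) (hfy i).ne', Real.log_exp] at hl
      simp only [Pi.sub_apply, Fof, hxdef, hydef] at *
      linarith
    · intro i
      have := h1 i
      simp only [Pi.smul_apply, smul_eq_mul] at this
      have hl : Real.log (f x i) ≤ Real.log (Real.exp β * f y i) :=
        Real.log_le_log (hfx i) this
      rw [Real.log_mul (Real.exp_ne_zero β) (hfy i).ne', Real.log_exp] at hl
      simp only [Pi.sub_apply, Fof, hxdef, hydef] at *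
      linarith
  exact key

include hmaps hhom in
lemma Fof_add_const (w : Fin n → ℝ) (c : ℝ) :
    Fof f (fun i => w i + c) = fun i => Fof f w i + c := by
  funext i
  have hx : ∀ j, 0 < Real.exp (w j) := fun j => Real.exp_pos _
  have h1 : (fun j => Real.exp (w j + c)) = Real.exp c • (fun j => Real.exp (w j)) := by
    funext j; simp [Real.exp_add, mul_comm]
  simp only [Fof, h1, hhom _ (Real.exp_pos c) _ hx, Pi.smul_apply, smul_eq_mul]
  rw [Real.log_mul (Real.exp_ne_zero c) (hmaps _ hx i).ne', Real.log_exp]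
  ring

include hmaps in
lemma Fof_log (y : Fin n → ℝ) (hy : ∀ i, 0 < y i) :
    Fof f (fun i => Real.log (y i)) = fun i => Real.log (f y i) := by
  funext i
  have : (fun j => Real.exp (Real.log (y j))) = y := by
    funext j; exact Real.exp_log (hy j)
  simp only [Fof, this]

include hmaps hhom hmono in
lemma dH_nonexp [Nonempty (Fin n)] {y z : Fin n → ℝ} (hy : ∀ i, 0 < y i) (hz : ∀ i, 0 < z i) :
    dH (f y) (f z) ≤ dH y z := by
  rw [dH_eq (hmaps y hy) (hmaps z hz), dH_eq hy hz]
  have h1 := Fof_nonexpansive f hmaps hhom hmono (fun i => Real.log (y i)) (fun i => Real.log (z i))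
  rw [Fof_log f hmaps y hy, Fof_log f hmaps z hz] at h1
  exact h1

include hmaps in
lemma iter_pos (x : Fin n → ℝ) (hx : ∀ i, 0 < x i) : ∀ k, ∀ i, 0 < f^[k] x i := by
  intro k; induction k with
  | zero => simpa using hx
  | succ k ih => rw [Function.iterate_succ_apply']; exact hmaps _ ih

include hmaps hhom hmono in
lemma dH_iter [Nonempty (Fin n)] {y z : Fin n → ℝ} (hy : ∀ i, 0 < y i) (hz : ∀ i, 0 < z i)
    (k : ℕ) : dH (f^[k] y) (f^[k] z) ≤ dH y z := by
  induction k with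
  | zero => simp
  | succ k ih =>
    rw [Function.iterate_succ_apply', Function.iterate_succ_apply']
    calc dH (f (f^[k] y)) (f (f^[k] z)) ≤ dH (f^[k] y) (f^[k] z) :=
          dH_nonexp f hmaps hhom hmono (iter_pos f hmaps y hy k) (iter_pos f hmaps z hz k)
      _ ≤ dH y z := ih

include hhom in
lemma iter_eig {v : Fin n → ℝ} (hv : ∀ i, 0 < v i) {lam : ℝ} (hlam : 0 < lam)
    (heig : f v = lam • v) : ∀ k, f^[k] v = lam ^ k • v := by
  intro k; induction k with
  | zero => simp
  | succ k ih =>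
    rw [Function.iterate_succ_apply', ih, hhom _ (pow_pos hlam k) v hv, heig,
      smul_smul, pow_succ]

include hmaps hhom hmono in
lemma bounded_of_eig [Nonempty (Fin n)] {v : Fin n → ℝ} (hv : ∀ i, 0 < v i) {lam : ℝ}
    (hlam : 0 < lam) (heig : f v = lam • v) (x : Fin n → ℝ) (hx : ∀ i, 0 < x i) :
    ∃ M : ℝ, ∀ k l : ℕ, dH (f^[k] x) (f^[l] x) ≤ M := by
  refine ⟨dH x v + dH v x, fun k l => ?_⟩
  have hkx := iter_pos f hmaps x hx
  have hkv := iter_pos f hmaps v hv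
  have t1 : dH (f^[k] x) (f^[l] x) ≤ dH (f^[k] x) (f^[k] v) + dH (f^[k] v) (f^[l] x) :=
    dH_triangle (hkx k) (hkv k) (hkx l)
  have t2 : dH (f^[k] v) (f^[l] x) ≤ dH (f^[k] v) (f^[l] v) + dH (f^[l] v) (f^[l] x) :=
    dH_triangle (hkv k) (hkv l) (hkx l)
  have e1 : dH (f^[k] v) (f^[l] v) = 0 := by
    rw [iter_eig f hhom hv hlam heig k, iter_eig f hhom hv hlam heig l]
    exact dH_scaled hv (pow_pos hlam k) (pow_pos hlam l)
  have n1 : dH (f^[k] x) (f^[k] v) ≤ dH x v := dH_iter f hmaps hhom hmono hx hv k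
  have n2 : dH (f^[l] v) (f^[l] x) ≤ dH v x := dH_iter f hmaps hhom hmono hv hx l
  linarith

include hmaps hhom hmono in
lemma eig_of_bounded (hn : 0 < n) (x : Fin n → ℝ) (hx : ∀ i, 0 < x i) (M : ℝ)
    (hM : ∀ k l : ℕ, dH (f^[k] x) (f^[l] x) ≤ M) :
    ∃ v : Fin n → ℝ, (∀ i, 0 < v i) ∧ ∃ lam : ℝ, 0 < lam ∧ f v = lam • v := by
  haveI : Nonempty (Fin n) := ⟨⟨0, hn⟩⟩
  set i0 : Fin n := ⟨0, hn⟩ with hi0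
  set G : (Fin n → ℝ) → (Fin n → ℝ) := fun w i => Fof f w i - Fof f w i0 with hG
  have hGzero : ∀ w, G w i0 = 0 := fun w => sub_self _
  have hGnon : ∀ u v, NV (G u - G v) ≤ NV (u - v) := by
    intro u v
    have he : G u - G v = fun i => (Fof f u - Fof f v) i + (Fof f v i0 - Fof f u i0) := by
      funext i
      simp only [hG, Pi.sub_apply]
      ring
    rw [he, NV_add_const (Fof f u - Fof f v) _]
    exact Fof_nonexpansive f hmaps hhom hmono u v
  have hGshift : ∀ (ww : Fin n → ℝ) (c : ℝ), G (fun i => ww i + c) = G ww := by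
    intro ww c
    funext i
    simp only [hG, Fof_add_const f hmaps hhom ww c]
    ring
  set p0 : Fin n → ℝ := fun i => Real.log (x i) - Real.log (x i0) with hp0
  have hp00 : p0 i0 = 0 := sub_self _
  have hGk : ∀ k, G^[k] p0 = fun i => Real.log (f^[k] x i) - Real.log (f^[k] x i0) := by
    intro k
    induction k with
    | zero => simp only [Function.iterate_zero_apply]; rfl
    | succ k ih =>
      rw [Function.iterate_succ_apply', ih]
      have h1 : (fun i => Real.log (f^[k] x i) - Real.log (f^[k] x i0)) =
          (fun i => Real.log (f^[k] x i) + (-(Real.log (f^[k] x i0)))) := by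
        funext i; ring
      rw [h1, hGshift (fun i => Real.log (f^[k] x i)) _]
      funext i
      simp only [hG, Fof_log f hmaps (f^[k] x) (iter_pos f hmaps x hx k),
        Function.iterate_succ_apply']
  have hGM : ∀ k l : ℕ, NV (G^[k] p0 - G^[l] p0) ≤ M := by
    intro k l
    rw [hGk k, hGk l]
    have he : ((fun i => Real.log (f^[k] x i) - Real.log (f^[k] x i0)) -
        (fun i => Real.log (f^[l] x i) - Real.log (f^[l] x i0))) =
        fun i => (Real.log (f^[k] x i) - Real.log (f^[l] x i)) +
          (Real.log (f^[l] x i0) - Real.log (f^[k] x i0)) := by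
      funext i
      simp only [Pi.sub_apply]
      ring
    rw [he, NV_add_const (fun i => Real.log (f^[k] x i) - Real.log (f^[l] x i)) _,
      ← dH_eq (iter_pos f hmaps x hx k) (iter_pos f hmaps x hx l)]
    exact hM k l
  obtain ⟨wst, hwst⟩ := G_fixed i0 G p0 M hGzero hp00 hGnon hGM
  set c : ℝ := Fof f wst i0 with hc
  have hFw : ∀ i, Fof f wst i = wst i + c := by
    intro i
    have h := congrFun hwst i
    simp only [hG] at h
    linarith [h]
  refine ⟨fun i => Real.exp (wst i), fun i => Real.exp_pos _, Real.exp c, Real.exp_pos c, ?_⟩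
  funext i
  have hpos := hmaps (fun j => Real.exp (wst j)) (fun j => Real.exp_pos _)
  have h1 : Real.log (f (fun j => Real.exp (wst j)) i) = wst i + c := hFw i
  have h2 : f (fun j => Real.exp (wst j)) i =
      Real.exp (Real.log (f (fun j => Real.exp (wst j)) i)) := (Real.exp_log (hpos i)).symm
  rw [Pi.smul_apply, smul_eq_mul, h2, h1, Real.exp_add]
  ring

end FF

end EigAux

theorem eigenvector_iff_bounded_orbit
    (n : ℕ) (hn : 0 < n) (f : (Fin n → ℝ) → (Fin n → ℝ))
    (hmaps : ∀ x : Fin n → ℝ, (∀ i, 0 < x i) → ∀ i, 0 < f x i)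
    (hhom : ∀ c : ℝ, 0 < c → ∀ x : Fin n → ℝ, (∀ i, 0 < x i) → f (c • x) = c • f x)
    (hmono : ∀ x y : Fin n → ℝ, (∀ i, 0 < x i) → (∀ i, 0 < y i) → x ≤ y → f x ≤ f y) :
    ((∃ x : Fin n → ℝ, (∀ i, 0 < x i) ∧ ∃ lam : ℝ, 0 < lam ∧ f x = lam • x) ↔
      (∃ x : Fin n → ℝ, (∀ i, 0 < x i) ∧
        ∃ M : ℝ, ∀ k l : ℕ, dH (f^[k] x) (f^[l] x) ≤ M)) ∧
    ((∃ x : Fin n → ℝ, (∀ i, 0 < x i) ∧ ∃ lam : ℝ, 0 < lam ∧ f x = lam • x) →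
      ∀ x : Fin n → ℝ, (∀ i, 0 < x i) →
        ∃ M : ℝ, ∀ k l : ℕ, dH (f^[k] x) (f^[l] x) ≤ M) := by
  haveI : Nonempty (Fin n) := ⟨⟨0, hn⟩⟩
  constructor
  · constructor
    · rintro ⟨v, hv, lam, hlam, heig⟩
      exact ⟨v, hv, EigAux.bounded_of_eig f hmaps hhom hmono hv hlam heig v hv⟩
    · rintro ⟨x, hx, M, hM⟩
      exact EigAux.eig_of_bounded f hmaps hhom hmono hn x hx M hM
  · rintro ⟨v, hv, lam, hlam, heig⟩ x hx
    exact EigAux.bounded_of_eig f hmaps hhom hmono hv hlam heig x hx
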